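/- Let f be σ-strongly convex and differentiable with minimizer x*, and let f_k be differentiable with f - f_k being c-restricted smooth w.r.t. x*. Then for any y^s, y⁰, 2σ‖y^s - x*‖² - 2⟨y^s - x*, ∇f_k(y^s) - ∇f_k(y⁰) + ∇f(y⁰)⟩ ≤ 3c‖y^s - x*‖² + c‖y⁰ - x*‖². -/

import Mathlib

open InnerProductSpace

section Aux

variable {d : ℕ}

/-- Inner product with the gradient equals the Fréchet derivative. -/
lemma inner_gradient_eq_fderiv {f : EuclideanSpace ℝ (Fin d) → ℝ}
    {y : EuclideanSpace ℝ (Fin d)} (hf : DifferentiableAt ℝ f y)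
    (v : EuclideanSpace ℝ (Fin d)) :
    ⟪gradient f y, v⟫_ℝ = fderiv ℝ f y v := by
  have h := hf.hasGradientAt.hasFDerivAt
  rw [h.fderiv, toDual_apply_apply]

/-- Gradient of a difference. -/
lemma gradient_sub_eq {f fk : EuclideanSpace ℝ (Fin d) → ℝ}
    (hf : Differentiable ℝ f) (hfk : Differentiable ℝ fk)
    (y : EuclideanSpace ℝ (Fin d)) :
    gradient (fun x => f x - fk x) y = gradient f y - gradient fk y := by
  have h : HasGradientAt (fun x => f x - fk x) (gradient f y - gradient fk y) y := by
    rw [hasGradientAt_iff_hasFDerivAt, map_sub]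
    exact ((hf y).hasGradientAt.hasFDerivAt).sub ((hfk y).hasGradientAt.hasFDerivAt)
  exact h.gradient

/-- Strong convexity plus vanishing gradient at the minimizer gives the
coercivity inequality. -/
lemma strong_convex_inner_ge {f : EuclideanSpace ℝ (Fin d) → ℝ} {σ : ℝ}
    (hf : Differentiable ℝ f) (hsc : StrongConvexOn Set.univ σ f)
    {xstar : EuclideanSpace ℝ (Fin d)} (hgrad0 : gradient f xstar = 0)
    (ys : EuclideanSpace ℝ (Fin d)) :
    σ * ‖ys - xstar‖ ^ 2 ≤ ⟪ys - xstar, gradient f ys⟫_ℝ := by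
  set u := ys - xstar with hu
  set a : ℝ := ⟪xstar, u⟫_ℝ with ha
  set b : ℝ := ‖u‖ ^ 2 with hb
  -- the auxiliary convex function along the line through xstar and ys
  set ψ : ℝ → ℝ := fun t => f (xstar + t • u) - σ / 2 * (‖xstar‖ ^ 2 + 2 * t * a + t ^ 2 * b)
    with hψ
  have hnorm : ∀ t : ℝ, ‖xstar + t • u‖ ^ 2 = ‖xstar‖ ^ 2 + 2 * t * a + t ^ 2 * b := by
    intro t
    rw [@norm_add_sq_real, real_inner_smul_right, norm_smul, mul_pow]
    simp [ha, hb]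
    ring
  -- convexity of ψ
  have hg : ConvexOn ℝ Set.univ (fun x => f x - σ / 2 * ‖x‖ ^ 2) :=
    strongConvexOn_iff_convex.mp hsc
  have hψconv : ConvexOn ℝ Set.univ ψ := by
    have := hg.comp_affineMap (AffineMap.lineMap xstar (xstar + u))
    have heq : ((fun x => f x - σ / 2 * ‖x‖ ^ 2) ∘
        (AffineMap.lineMap xstar (xstar + u) : ℝ →ᵃ[ℝ] EuclideanSpace ℝ (Fin d))) = ψ := by
      funext t
      simp only [Function.comp_apply, AffineMap.lineMap_apply, hψ, vsub_eq_sub,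
        vadd_eq_add]
      have : (t • (xstar + u - xstar) + xstar) = xstar + t • u := by
        rw [add_sub_cancel_left]; module
      rw [this, hnorm t]
    rw [heq] at this
    simpa using this
  -- derivative of ψ
  have hψderiv : ∀ t : ℝ, HasDerivAt ψ
      (⟪gradient f (xstar + t • u), u⟫_ℝ - σ / 2 * (2 * a + 2 * t * b)) t := by
    intro t
    have hline : HasDerivAt (fun t : ℝ => xstar + t • u) u t := by
      simpa using ((hasDerivAt_id t).smul_const u).const_add xstar
    have hfd := ((hf (xstar + t • u)).hasGradientAt.hasFDerivAt).comp_hasDerivAt t hline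
    have h1 : HasDerivAt (fun t : ℝ => f (xstar + t • u))
        (⟪gradient f (xstar + t • u), u⟫_ℝ) t := by
      rw [toDual_apply_apply] at hfd
      exact hfd
    have h2 : HasDerivAt (fun t : ℝ => σ / 2 * (‖xstar‖ ^ 2 + 2 * t * a + t ^ 2 * b))
        (σ / 2 * (2 * a + 2 * t * b)) t := by
      have h2a : HasDerivAt (fun t : ℝ => 2 * t * a) (2 * a) t := by
        simpa using ((hasDerivAt_id t).const_mul 2).mul_const a
      have h2b : HasDerivAt (fun t : ℝ => t ^ 2 * b) (2 * t * b) t := by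
        simpa [pow_one] using (hasDerivAt_pow 2 t).mul_const b
      have := (((hasDerivAt_const t (‖xstar‖ ^ 2)).add h2a).add h2b).const_mul (σ / 2)
      convert this using 1
      · rfl
      · rfl
      · rfl
      ring
    exact h1.sub h2
  -- monotonicity of deriv ψ
  have hmono := ConvexOn.monotoneOn_deriv hψconv
    (fun x _ => (hψderiv x).differentiableAt)
  have hle : deriv ψ 0 ≤ deriv ψ 1 :=
    hmono (Set.mem_univ 0) (Set.mem_univ 1) zero_le_one
  rw [(hψderiv 0).deriv, (hψderiv 1).deriv] at hle
  have h0 : xstar + (0 : ℝ) • u = xstar := by simp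
  have h1 : xstar + (1 : ℝ) • u = ys := by rw [one_smul, hu]; abel
  rw [h0, h1, hgrad0] at hle
  simp only [inner_zero_left] at hle
  have := real_inner_comm (gradient f ys) u
  nlinarith [hle]

end Aux

/-- supply-rate bound `S₂` of Lemma 5 (strongly convex case). -/
theorem statement8 {d : ℕ} (f fk : EuclideanSpace ℝ (Fin d) → ℝ) (c σ : ℝ)
    (hc : 0 ≤ c) (hσ : 0 < σ)
    (hf : Differentiable ℝ f) (hsc : StrongConvexOn Set.univ σ f)
    (hfk : Differentiable ℝ fk)
    (xstar : EuclideanSpace ℝ (Fin d))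
    (hmin : IsMinOn f Set.univ xstar) (hgrad0 : gradient f xstar = 0)
    (hr : ∀ y, ‖gradient (fun x => f x - fk x) xstar
        - gradient (fun x => f x - fk x) y‖ ≤ c * ‖xstar - y‖)
    (ys y0 : EuclideanSpace ℝ (Fin d)) :
    2 * σ * ‖ys - xstar‖ ^ 2
      - 2 * ⟪ys - xstar, gradient fk ys - gradient fk y0 + gradient f y0⟫_ℝ ≤
      3 * c * ‖ys - xstar‖ ^ 2 + c * ‖y0 - xstar‖ ^ 2 := by
  set u := ys - xstar with hu
  set G : EuclideanSpace ℝ (Fin d) → EuclideanSpace ℝ (Fin d) :=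
    fun y => gradient (fun x => f x - fk x) y with hG
  -- strong convexity inequality
  have hstrong : σ * ‖u‖ ^ 2 ≤ ⟪u, gradient f ys⟫_ℝ :=
    strong_convex_inner_ge hf hsc hgrad0 ys
  -- rewrite the gradient combination
  have hkey : gradient fk ys - gradient fk y0 + gradient f y0
      = gradient f ys - (G ys - G y0) := by
    have h1 : G ys = gradient f ys - gradient fk ys := gradient_sub_eq hf hfk ys
    have h2 : G y0 = gradient f y0 - gradient fk y0 := gradient_sub_eq hf hfk y0
    rw [h1, h2]; abel
  rw [hkey]
  -- bound the perturbation terms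
  have hrs : ‖G xstar - G ys‖ ≤ c * ‖xstar - ys‖ := hr ys
  have hr0 : ‖G xstar - G y0‖ ≤ c * ‖xstar - y0‖ := hr y0
  have hb1 : ⟪u, G ys - G xstar⟫_ℝ ≤ c * ‖u‖ ^ 2 := by
    calc ⟪u, G ys - G xstar⟫_ℝ ≤ ‖u‖ * ‖G ys - G xstar‖ := real_inner_le_norm _ _
      _ ≤ ‖u‖ * (c * ‖xstar - ys‖) := by
          have : ‖G ys - G xstar‖ = ‖G xstar - G ys‖ := norm_sub_rev _ _
          rw [this]
          exact mul_le_mul_of_nonneg_left hrs (norm_nonneg _)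
      _ = c * ‖u‖ ^ 2 := by
          have : ‖xstar - ys‖ = ‖u‖ := by rw [hu, norm_sub_rev]
          rw [this]; ring
  have hb2 : ⟪u, G xstar - G y0⟫_ℝ ≤ c * ‖u‖ * ‖y0 - xstar‖ := by
    calc ⟪u, G xstar - G y0⟫_ℝ ≤ ‖u‖ * ‖G xstar - G y0‖ := real_inner_le_norm _ _
      _ ≤ ‖u‖ * (c * ‖xstar - y0‖) := mul_le_mul_of_nonneg_left hr0 (norm_nonneg _)
      _ = c * ‖u‖ * ‖y0 - xstar‖ := by rw [norm_sub_rev xstar y0]; ring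
  -- put everything together
  have hsplit : ⟪u, gradient f ys - (G ys - G y0)⟫_ℝ
      = ⟪u, gradient f ys⟫_ℝ - ⟪u, G ys - G xstar⟫_ℝ - ⟪u, G xstar - G y0⟫_ℝ := by
    rw [← inner_sub_right, ← inner_sub_right]
    congr 1
    abel
  rw [hsplit]
  nlinarith [sq_nonneg (‖u‖ - ‖y0 - xstar‖), norm_nonneg u, norm_nonneg (y0 - xstar)]
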